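/- Let G be finite Abelian, A = D ◊_{σ,α} G. If W ∩ G_reg = {e} and for every s ∈ W_reg∖G_reg there is no d ∈ D∖{0} with σ_x(d)/d = f(x,s) for all x ∈ G with α(x,s) ≠ α(s,x), then Z(A) = D^G. -/
import Mathlib


/-- A crystalline graded ring `A = D ◊_{σ,α} G` over a commutative domain `D`:
`D` embeds in `A` via `ι`, `u : G → A` with `u_e = 1`, the automorphisms
`σ : G → Aut(D)` form a group morphism (as `D` is commutative, `σ_{gh} = σ_g σ_h`),
`α : G × G → D \ {0}` satisfies `u_g r = σ_g(r) u_g`, `u_g u_h = α(g,h) u_{gh}`,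
`α(g,e) = α(e,g) = 1` and the 2-cocycle relation, and `A = ⊕_g D u_g` (the
`basis` field).  The kernel of the twist is `W = {g : σ_g = 1}`. -/
structure CrysDom (G D A : Type*) [Group G] [CommRing D] [IsDomain D] [Ring A] where
  ι : D →+* A
  inj : Function.Injective ι
  u : G → A
  σ : G →* RingAut D
  α : G → G → D
  α_ne_zero : ∀ g h : G, α g h ≠ 0
  u_one : u 1 = 1
  comm : ∀ (g : G) (r : D), u g * ι r = ι (σ g r) * u g
  mul_u : ∀ g h : G, u g * u h = ι (α g h) * u (g * h)
  α_one_left : ∀ g : G, α 1 g = 1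
  α_one_right : ∀ g : G, α g 1 = 1
  cocycle : ∀ g h t : G, α g h * α (g * h) t = σ g (α h t) * α g (h * t)
  basis : Function.Bijective (fun f : G →₀ D => f.sum fun g r => ι r * u g)

namespace CrysDomAux

variable {G D A : Type*} [Group G] [CommRing D] [IsDomain D] [Ring A] (P : CrysDom G D A)

/-- The linearization map. -/
noncomputable def phi (f : G →₀ D) : A := f.sum fun g r => P.ι r * P.u g

lemma phi_sum_single (f : G →₀ D) (t : G → G) (c : G → D → D) (hc : ∀ g, c g 0 = 0) :
    phi P (f.sum fun g r => Finsupp.single (t g) (c g r)) =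
      f.sum fun g r => P.ι (c g r) * P.u (t g) := by
  classical
  unfold phi
  rw [Finsupp.sum_sum_index (fun a => by simp) (fun a b₁ b₂ => by rw [map_add, add_mul])]
  refine Finset.sum_congr rfl fun g hg => ?_
  dsimp only
  rw [Finsupp.sum_single_index (by rw [map_zero, zero_mul])]

lemma apply_sum_single (f : G →₀ D) (t : G → G) (ht : Function.Injective t)
    (c : G → D → D) (hc : ∀ g, c g 0 = 0) (s : G) :
    (f.sum fun g r => Finsupp.single (t g) (c g r)) (t s) = c s (f s) := by
  classical
  rw [Finsupp.sum_apply, Finsupp.sum, Finset.sum_eq_single s]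
  · simp [Finsupp.single_apply]
  · intro g _ hgs
    rw [Finsupp.single_apply, if_neg (fun h => hgs (ht h))]
  · intro hs
    rw [Finsupp.notMem_support_iff.mp hs, hc]
    simp

end CrysDomAux

open CrysDomAux in
/-- Triviality of the center: if `W ∩ G_reg = {e}` and for every
`s ∈ W_reg \ G_reg` there is no `0 ≠ d ∈ D` with `σ_x(d)/d = f(x,s)` (i.e.
`σ_x(d)·α(s,x) = d·α(x,s)`) for all `x` with `α(x,s) ≠ α(s,x)`, then
`Z(A) = D^G`.  Here `W = Ker σ`, `G_reg`, `W_reg` are the `α`-regular elements of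
`G` resp. `W`, and `D^G` is the fixed subring. -/
theorem center_trivial {G D A : Type*} [CommGroup G] [Fintype G]
    [CommRing D] [IsDomain D] [IsDedekindDomain D] [Ring A] (P : CrysDom G D A)
    (h1 : ∀ s : G, P.σ s = 1 → (∀ x : G, P.α s x = P.α x s) → s = 1)
    (h2 : ∀ s : G, (P.σ s = 1 ∧ ∀ x : G, P.σ x = 1 → P.α s x = P.α x s) →
      (∃ x : G, P.α x s ≠ P.α s x) →
      ¬∃ d : D, d ≠ 0 ∧ ∀ x : G, P.α x s ≠ P.α s x →
        P.σ x d * P.α s x = d * P.α x s) :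
    (Subring.center A : Set A) = P.ι '' {d : D | ∀ x : G, P.σ x d = d} := by
  classical
  have hphi : ∀ f : G →₀ D, phi P f = f.sum fun g r => P.ι r * P.u g := fun f => rfl
  ext a
  constructor
  · -- forward direction
    intro ha
    rw [SetLike.mem_coe, Subring.mem_center_iff] at ha
    obtain ⟨f, hf⟩ := P.basis.surjective a
    have hfa : phi P f = a := hf
    -- centrality against ι d
    have H1 : ∀ (g : G) (d : D), f g * P.σ g d = d * f g := by
      intro g d
      have e1 : a * P.ι d = phi P (f.sum fun g r => Finsupp.single (id g) (r * P.σ g d)) := by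
        rw [phi_sum_single P f id (fun g r => r * P.σ g d) (fun g => zero_mul _)]
        rw [← hfa, hphi, Finsupp.sum_mul]
        refine Finset.sum_congr rfl fun g' _ => ?_
        dsimp only [id]
        rw [mul_assoc, P.comm, ← mul_assoc, ← map_mul]
      have e2 : P.ι d * a = phi P (f.sum fun g r => Finsupp.single (id g) (d * r)) := by
        rw [phi_sum_single P f id (fun g r => d * r) (fun g => mul_zero _)]
        rw [← hfa, hphi, Finsupp.mul_sum]
        refine Finset.sum_congr rfl fun g' _ => ?_
        dsimp only [id]
        rw [← mul_assoc, ← map_mul]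
      have e3 : phi P (f.sum fun g r => Finsupp.single (id g) (r * P.σ g d)) =
          phi P (f.sum fun g r => Finsupp.single (id g) (d * r)) := by
        rw [← e1, ← e2, ha]
      have heq := P.basis.injective e3
      have h1' := apply_sum_single f id Function.injective_id
        (fun g r => r * P.σ g d) (fun g => zero_mul _) g
      have h2' := apply_sum_single f id Function.injective_id
        (fun g r => d * r) (fun g => mul_zero _) g
      rw [heq] at h1'
      exact h1'.symm.trans h2'
    have H2 : ∀ (g x : G), f g * P.α g x = P.σ x (f g) * P.α x g := by
      intro g x
      have e1 : a * P.u x =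
          phi P (f.sum fun g r => Finsupp.single ((fun g => g * x) g) (r * P.α g x)) := by
        rw [phi_sum_single P f (fun g => g * x) (fun g r => r * P.α g x) (fun g => zero_mul _)]
        rw [← hfa, hphi, Finsupp.sum_mul]
        refine Finset.sum_congr rfl fun g' _ => ?_
        dsimp only
        rw [mul_assoc, P.mul_u, ← mul_assoc, ← map_mul]
      have e2 : P.u x * a =
          phi P (f.sum fun g r => Finsupp.single ((fun g => g * x) g)
            (P.σ x r * P.α x g)) := by
        rw [phi_sum_single P f (fun g => g * x) (fun g r => P.σ x r * P.α x g)
          (fun g => by simp)]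
        rw [← hfa, hphi, Finsupp.mul_sum]
        refine Finset.sum_congr rfl fun g' _ => ?_
        dsimp only
        rw [← mul_assoc, P.comm, mul_assoc, P.mul_u, ← mul_assoc, ← map_mul, mul_comm x g']
      have e3 : phi P (f.sum fun g r => Finsupp.single ((fun g => g * x) g) (r * P.α g x)) =
          phi P (f.sum fun g r => Finsupp.single ((fun g => g * x) g)
            (P.σ x r * P.α x g)) := by
        rw [← e1, ← e2, ha]
      have heq := P.basis.injective e3
      have h1' := apply_sum_single f (fun g => g * x) (fun _ _ h => mul_right_cancel h)
        (fun g r => r * P.α g x) (fun g => zero_mul _) g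
      have h2' := apply_sum_single f (fun g => g * x) (fun _ _ h => mul_right_cancel h)
        (fun g r => P.σ x r * P.α x g) (fun g => by simp) g
      rw [heq] at h1'
      exact h1'.symm.trans h2'
    -- the twist is trivial on the support
    have Hsig : ∀ g : G, f g ≠ 0 → P.σ g = 1 := by
      intro g hg
      refine DFunLike.ext _ _ fun d => ?_
      have h := H1 g d
      rw [mul_comm d (f g)] at h
      exact mul_left_cancel₀ hg h
    -- coefficients at non-identity elements vanish
    have Hzero : ∀ g : G, g ≠ 1 → f g = 0 := by
      intro g hg10
      by_contra hgne
      have hsg : P.σ g = 1 := Hsig g hgne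
      have ht : ∀ x : G, f g * P.α g x = P.σ x (f g) * P.α x g := fun x => H2 g x
      have hst : P.σ g⁻¹ = 1 := by rw [map_inv, hsg, inv_one]
      have key : ∀ x : G,
          P.σ x (P.α g⁻¹ g * f g) * P.α g⁻¹ x = (P.α g⁻¹ g * f g) * P.α x g⁻¹ := by
        intro x
        have hi : P.α g⁻¹ g = P.α g x * P.α g⁻¹ (g * x) := by
          have h := P.cocycle g⁻¹ g x
          rw [inv_mul_cancel, P.α_one_left, mul_one, hst] at h
          simpa using h
        have hii : P.α x g⁻¹ * P.α (g⁻¹ * x) g = P.σ x (P.α g⁻¹ g) := by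
          have h := P.cocycle x g⁻¹ g
          rw [inv_mul_cancel, P.α_one_right, mul_one, mul_comm x g⁻¹] at h
          exact h
        have hiii : P.α g⁻¹ x * P.α (g⁻¹ * x) g = P.α x g * P.α g⁻¹ (g * x) := by
          have h := P.cocycle g⁻¹ x g
          rw [hst, mul_comm x g] at h
          simpa using h
        have hht := ht x
        rw [map_mul]
        linear_combination (P.σ x (f g) * P.α g⁻¹ x) * hii.symm +
          (P.σ x (f g) * P.α x g⁻¹) * hiii -
          (P.α x g⁻¹ * P.α g⁻¹ (g * x)) * hht -
          (f g * P.α x g⁻¹) * hi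
      by_cases hall : ∀ x : G, P.α g⁻¹ x = P.α x g⁻¹
      · exact hg10 (inv_eq_one.mp (h1 g⁻¹ hst hall))
      · push_neg at hall
        obtain ⟨x0, hx0⟩ := hall
        refine h2 g⁻¹ ⟨hst, fun x hx => ?_⟩ ⟨x0, fun h => hx0 h.symm⟩
          ⟨P.α g⁻¹ g * f g, mul_ne_zero (P.α_ne_zero g⁻¹ g) hgne, fun x _ => key x⟩
        have k : P.α g⁻¹ g * f g * P.α g⁻¹ x = P.α g⁻¹ g * f g * P.α x g⁻¹ := by
          have k := key x
          rw [hx] at k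
          exact k
        exact mul_left_cancel₀ (mul_ne_zero (P.α_ne_zero g⁻¹ g) hgne) k
    -- hence `a = ι (f 1)` with `f 1` fixed
    have hf1 : f = Finsupp.single 1 (f 1) := by
      ext g
      by_cases h : g = 1
      · subst h; simp
      · rw [Hzero g h, Finsupp.single_apply, if_neg (Ne.symm h)]
    have ha1 : a = P.ι (f 1) := by
      rw [← hfa, hphi, hf1, Finsupp.sum_single_index (by rw [map_zero, zero_mul]),
        P.u_one, mul_one, Finsupp.single_eq_same]
    refine ⟨f 1, fun x => ?_, ha1.symm⟩
    have h := H2 1 x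
    rw [P.α_one_left, P.α_one_right, mul_one, mul_one] at h
    exact h.symm
  · -- reverse direction
    rintro ⟨d, hd, rfl⟩
    rw [SetLike.mem_coe, Subring.mem_center_iff]
    intro b
    obtain ⟨f, hf⟩ := P.basis.surjective b
    rw [← hf]
    show (f.sum fun g r => P.ι r * P.u g) * P.ι d = P.ι d * f.sum fun g r => P.ι r * P.u g
    rw [Finsupp.sum_mul, Finsupp.mul_sum]
    refine Finset.sum_congr rfl fun g _ => ?_
    dsimp only
    rw [mul_assoc, P.comm, hd g, ← mul_assoc, ← map_mul, mul_comm (f g) d, map_mul, mul_assoc]
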